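/- arXiv:2301.02512 — 2 statements merged into one kernel-verified Lean document; each statement's English description precedes it below -/
import Mathlib

section
/- Let f be a twice-differentiable solution of the Painlevé I equation f''(x) = 6·f(x)² + x and let g(x) = f(x)². Then g satisfies the order-2, degree-4 algebraic differential equation −16x²·g³ − 192x·g⁴ − 576·g⁵ + 4·g²·(g'')² − 4·g·(g')²·g'' + (g')⁴ = 0. -/
/-- If `f` is a (twice continuously differentiable) solution of the Painlevé I equation
`f'' = 6·f² + x` on an open set and `g = f²`, then `g` satisfies the order-2, degree-4
algebraic differential equation
`−16x²·g³ − 192x·g⁴ − 576·g⁵ + 4·g²·(g'')² − 4·g·(g')²·g'' + (g')⁴ = 0`. -/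
theorem sq_painleveI (f : ℝ → ℝ) (s : Set ℝ) (hs : IsOpen s)
    (hf : ContDiffOn ℝ 2 f s)
    (hP : ∀ x ∈ s, deriv (deriv f) x = 6 * f x ^ 2 + x) :
    ∀ x ∈ s,
      -16 * x ^ 2 * (f x ^ 2) ^ 3 - 192 * x * (f x ^ 2) ^ 4 - 576 * (f x ^ 2) ^ 5
        + 4 * (f x ^ 2) ^ 2 * (deriv (deriv fun t => f t ^ 2) x) ^ 2
        - 4 * (f x ^ 2) * (deriv (fun t => f t ^ 2) x) ^ 2
            * deriv (deriv fun t => f t ^ 2) x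
        + (deriv (fun t => f t ^ 2) x) ^ 4 = 0 := by
  intro x hx
  have hdf : ∀ y ∈ s, DifferentiableAt ℝ f y := fun y hy =>
    ((hf.contDiffAt (hs.mem_nhds hy)).differentiableAt (by norm_num))
  have hdf' : ∀ y ∈ s, DifferentiableAt ℝ (deriv f) y := by
    intro y hy
    have h := (((hf.contDiffAt (hs.mem_nhds hy)).fderiv_right
      (m := 1) (by norm_num)).differentiableAt (by norm_num)).clm_apply
      (differentiableAt_const (1 : ℝ))
    have : (fun z => fderiv ℝ f z 1) = deriv f := funext fun z => fderiv_apply_one_eq_deriv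
    rwa [this] at h
  have h1 : ∀ y ∈ s, deriv (fun t => f t ^ 2) y = 2 * f y * deriv f y := by
    intro y hy
    rw [deriv_fun_pow (hdf y hy)]
    ring
  have h2 : deriv (deriv fun t => f t ^ 2) x
      = 2 * deriv f x * deriv f x + 2 * f x * (6 * f x ^ 2 + x) := by
    have hev : (deriv fun t => f t ^ 2) =ᶠ[nhds x] fun y => 2 * f y * deriv f y := by
      filter_upwards [hs.mem_nhds hx] with y hy using h1 y hy
    rw [hev.deriv_eq]
    have hprod : DifferentiableAt ℝ (fun y => f y * deriv f y) x :=
      (hdf x hx).mul (hdf' x hx)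
    rw [show (fun y => 2 * f y * deriv f y) = fun y => 2 * (f y * deriv f y) by
        funext y; ring]
    rw [deriv_const_mul _ hprod, deriv_fun_mul (hdf x hx) (hdf' x hx), hP x hx]
    ring
  rw [h1 x hx, h2]
  ring
end

section
/- Let k be a field, I = ⟨f₁, ..., f_r⟩ an ideal in k[y₁, ..., y_n], m ∈ ℕ. Let Ĩ_m ⊂ k[y_{i,ℓ} : 1 ≤ i ≤ n, 0 ≤ ℓ ≤ m] be the jet ideal generated by the coefficients f_{s,j} (0 ≤ j ≤ m) of t^j in f_s(y₁(t), ..., y_n(t)) where y_i(t) = Σ_{ℓ=0}^{m} y_{i,ℓ} t^ℓ, and let I^(≤m) be the differential truncation ideal generated by f_s, f_s', ..., f_s^(m) in k[y_i^(≤m)] with the derivation y_i^(j) ↦ y_i^(j+1). If k has characteristic 0, then the map y_{i,ℓ} ↦ y_i^(ℓ)/ℓ! induces an isomorphism of k-algebras k[y_{i,ℓ}]/Ĩ_m ≅ k[y₁^(≤m), ..., y_n^(≤m)]/I^(≤m). -/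
open MvPolynomial

/-- Substitution of the truncated power series (jets) `y i ↦ ∑_{ℓ=0}^{m} y_{i,ℓ} · tˡ`
into a polynomial in `y₁, …, y_n`, producing a polynomial in `t` whose coefficients lie
in the jet-variable polynomial ring `k[y_{i,ℓ}]`. -/
noncomputable def jetSubst (k : Type*) [CommRing k] (n m : ℕ) :
    MvPolynomial (Fin n) k →ₐ[k] Polynomial (MvPolynomial (Fin n × Fin (m + 1)) k) :=
  MvPolynomial.aeval fun i : Fin n =>
    ∑ ℓ : Fin (m + 1), Polynomial.C (MvPolynomial.X (i, ℓ)) * Polynomial.X ^ (ℓ : ℕ)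

/-- The jet ideal `Ĩ_m`, generated by the coefficients `f_{s,j}` of `tʲ` (`0 ≤ j ≤ m`)
in `f_s(y₁(t), …, y_n(t))`. -/
noncomputable def jetIdeal (k : Type*) [CommRing k] {n r : ℕ}
    (f : Fin r → MvPolynomial (Fin n) k) (m : ℕ) :
    Ideal (MvPolynomial (Fin n × Fin (m + 1)) k) :=
  Ideal.span {g | ∃ (s : Fin r) (j : ℕ), j ≤ m ∧ g = (jetSubst k n m (f s)).coeff j}

/-- The derivation on the truncated differential polynomial ring
`k[y_i⁽ʲ⁾ : 1 ≤ i ≤ n, 0 ≤ j ≤ m]` sending `y_i⁽ʲ⁾ ↦ y_i⁽ʲ⁺¹⁾` for `j < m` and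
`y_i⁽ᵐ⁾ ↦ 0`. -/
noncomputable def truncDeriv (k : Type*) [CommRing k] (n m : ℕ) :
    Derivation k (MvPolynomial (Fin n × Fin (m + 1)) k)
      (MvPolynomial (Fin n × Fin (m + 1)) k) :=
  MvPolynomial.mkDerivation k fun v : Fin n × Fin (m + 1) =>
    if h : (v.2 : ℕ) + 1 < m + 1 then MvPolynomial.X (v.1, ⟨(v.2 : ℕ) + 1, h⟩) else 0

/-- The truncated differential ideal `I^{(≤ m)}`, generated by `f_s, f_s', …, f_s⁽ᵐ⁾`
(each `f_s` viewed in the variables `y_i⁽⁰⁾`). -/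
noncomputable def truncDiffIdeal (k : Type*) [CommRing k] {n r : ℕ}
    (f : Fin r → MvPolynomial (Fin n) k) (m : ℕ) :
    Ideal (MvPolynomial (Fin n × Fin (m + 1)) k) :=
  Ideal.span {g | ∃ (s : Fin r) (j : ℕ), j ≤ m ∧
    g = (⇑(truncDeriv k n m))^[j]
          (MvPolynomial.rename (fun i : Fin n => (i, (0 : Fin (m + 1)))) (f s))}

noncomputable section JetAux

set_option linter.unusedSectionVars false

variable (k : Type*) [Field k] [CharZero k] (n m : ℕ)

def phiF : MvPolynomial (Fin n × Fin (m + 1)) k →ₐ[k] MvPolynomial (Fin n × Fin (m + 1)) k :=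
  MvPolynomial.aeval fun v => (((v.2 : ℕ).factorial : k)⁻¹) • MvPolynomial.X v

def phiB : MvPolynomial (Fin n × Fin (m + 1)) k →ₐ[k] MvPolynomial (Fin n × Fin (m + 1)) k :=
  MvPolynomial.aeval fun v => (((v.2 : ℕ).factorial : k)) • MvPolynomial.X v

def phi : MvPolynomial (Fin n × Fin (m + 1)) k ≃ₐ[k] MvPolynomial (Fin n × Fin (m + 1)) k :=
  AlgEquiv.ofAlgHom (phiF k n m) (phiB k n m)
    (by
      apply MvPolynomial.algHom_ext; intro v
      simp [phiF, phiB, smul_smul,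
        mul_inv_cancel₀ (show (((v.2:ℕ).factorial : k)) ≠ 0 by
          exact_mod_cast Nat.factorial_ne_zero _)])
    (by
      apply MvPolynomial.algHom_ext; intro v
      simp [phiF, phiB, smul_smul,
        inv_mul_cancel₀ (show (((v.2:ℕ).factorial : k)) ≠ 0 by
          exact_mod_cast Nat.factorial_ne_zero _)])

lemma phi_apply (x : MvPolynomial (Fin n × Fin (m + 1)) k) :
    phi k n m x = phiF k n m x := rfl

/-- coefficientwise application of the derivation to a polynomial. -/
def Lmap (p : Polynomial (MvPolynomial (Fin n × Fin (m + 1)) k)) :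
    Polynomial (MvPolynomial (Fin n × Fin (m + 1)) k) :=
  p.sum fun e a => Polynomial.C (truncDeriv k n m a) * Polynomial.X ^ e

lemma Lmap_coeff (p : Polynomial (MvPolynomial (Fin n × Fin (m + 1)) k)) (j : ℕ) :
    (Lmap k n m p).coeff j = truncDeriv k n m (p.coeff j) := by
  rw [Lmap, Polynomial.sum_def, Polynomial.finset_sum_coeff]
  simp only [Polynomial.coeff_C_mul, Polynomial.coeff_X_pow, mul_ite, mul_one, mul_zero]
  rw [Finset.sum_eq_single j]
  · simp
  · intro b _ hb; simp [Ne.symm hb]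
  · intro hj
    simp [Polynomial.notMem_support_iff.mp hj]

lemma Lmap_mul (p q : Polynomial (MvPolynomial (Fin n × Fin (m + 1)) k)) :
    Lmap k n m (p * q) = Lmap k n m p * q + p * Lmap k n m q := by
  refine Polynomial.ext fun j => ?_
  simp only [Lmap_coeff, Polynomial.coeff_add, Polynomial.coeff_mul]
  have hs := map_sum (truncDeriv k n m) (fun x : ℕ × ℕ => p.coeff x.1 * q.coeff x.2)
    (Finset.HasAntidiagonal.antidiagonal j)
  rw [hs]
  rw [← Finset.sum_add_distrib]
  apply Finset.sum_congr rfl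
  intro x _
  rw [Derivation.leibniz]
  simp only [smul_eq_mul]
  ring

lemma Lmap_add (p q : Polynomial (MvPolynomial (Fin n × Fin (m + 1)) k)) :
    Lmap k n m (p + q) = Lmap k n m p + Lmap k n m q := by
  refine Polynomial.ext fun j => ?_
  simp [Lmap_coeff]

def Jmap : MvPolynomial (Fin n) k →ₐ[k] Polynomial (MvPolynomial (Fin n × Fin (m + 1)) k) :=
  (Polynomial.mapAlgHom (phiF k n m)).comp (jetSubst k n m)

lemma Jmap_coeff_eq (g : MvPolynomial (Fin n) k) (j : ℕ) :
    (Jmap k n m g).coeff j = phiF k n m ((jetSubst k n m g).coeff j) := by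
  simp [Jmap, Polynomial.coeff_map]

lemma Jmap_X (i : Fin n) :
    Jmap k n m (MvPolynomial.X i) =
      ∑ ℓ : Fin (m + 1),
        Polynomial.C ((((ℓ : ℕ).factorial : k)⁻¹) • MvPolynomial.X (i, ℓ)) *
          Polynomial.X ^ (ℓ : ℕ) := by
  simp [Jmap, jetSubst, phiF, Polynomial.map_sum]

lemma Jmap_X_coeff (i : Fin n) (j : ℕ) :
    (Jmap k n m (MvPolynomial.X i)).coeff j =
      if h : j < m + 1 then ((j.factorial : k)⁻¹) • MvPolynomial.X (i, ⟨j, h⟩) else 0 := by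
  rw [Jmap_X, Polynomial.finset_sum_coeff]
  simp only [Polynomial.coeff_C_mul, Polynomial.coeff_X_pow, mul_ite, mul_one, mul_zero]
  split
  · next h =>
      rw [Finset.sum_eq_single (⟨j, h⟩ : Fin (m + 1))]
      · simp
      · intro b _ hb
        have : j ≠ (b : ℕ) := by
          intro hc; apply hb; apply Fin.ext; simp [← hc]
        simp [this]
      · simp
  · next h =>
      apply Finset.sum_eq_zero
      intro ℓ _
      have : j ≠ (ℓ : ℕ) := by
        intro hc; exact h (hc ▸ ℓ.isLt)
      simp [this]

lemma truncDeriv_X (v : Fin n × Fin (m + 1)) :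
    truncDeriv k n m (MvPolynomial.X v) =
      if h : (v.2 : ℕ) + 1 < m + 1 then MvPolynomial.X (v.1, ⟨(v.2 : ℕ) + 1, h⟩) else 0 := by
  rw [truncDeriv, MvPolynomial.mkDerivation_X]

lemma factorial_scalar (j : ℕ) :
    ((j + 1 : ℕ) : k) * (((j + 1).factorial : k)⁻¹) = ((j.factorial : k)⁻¹) := by
  rw [Nat.factorial_succ, Nat.cast_mul, mul_inv]
  rw [← mul_assoc, mul_inv_cancel₀ (by exact_mod_cast Nat.succ_ne_zero j), one_mul]

lemma L_J_X (i : Fin n) :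
    Lmap k n m (Jmap k n m (MvPolynomial.X i)) =
      Polynomial.derivative (Jmap k n m (MvPolynomial.X i)) := by
  refine Polynomial.ext fun j => ?_
  rw [Lmap_coeff, Polynomial.coeff_derivative, Jmap_X_coeff, Jmap_X_coeff]
  by_cases h1 : j + 1 < m + 1
  · have h0 : j < m + 1 := Nat.lt_of_succ_lt h1
    rw [dif_pos h0, dif_pos h1]
    rw [Derivation.map_smul, truncDeriv_X]
    rw [dif_pos (show ((⟨j, h0⟩ : Fin (m+1)) : ℕ) + 1 < m + 1 from h1)]
    have hc : ((j : MvPolynomial (Fin n × Fin (m + 1)) k) + 1) = ((j + 1 : ℕ) : _) := by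
      push_cast; ring
    rw [mul_comm, hc, ← nsmul_eq_mul, ← Nat.cast_smul_eq_nsmul k, smul_smul, factorial_scalar]
  · rw [dif_neg h1]
    by_cases h0 : j < m + 1
    · rw [dif_pos h0, Derivation.map_smul, truncDeriv_X]
      rw [dif_neg (show ¬ (((⟨j, h0⟩ : Fin (m+1)) : ℕ) + 1 < m + 1) from h1)]
      simp
    · rw [dif_neg h0]
      simp

lemma L_J (g : MvPolynomial (Fin n) k) :
    Lmap k n m (Jmap k n m g) = Polynomial.derivative (Jmap k n m g) := by
  induction g using MvPolynomial.induction_on with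
  | C a =>
      refine Polynomial.ext fun j => ?_
      rw [Lmap_coeff]
      have : Jmap k n m (MvPolynomial.C a) = Polynomial.C (MvPolynomial.C a) := by
        have : (MvPolynomial.C a : MvPolynomial (Fin n) k) = algebraMap k _ a := rfl
        rw [this, AlgHom.commutes]
        rfl
      rw [this]
      simp only [Polynomial.derivative_C, Polynomial.coeff_C, Polynomial.coeff_zero]
      split
      · rw [show (MvPolynomial.C a : MvPolynomial (Fin n × Fin (m+1)) k) = algebraMap k _ a
          from rfl, Derivation.map_algebraMap]
      · simp
  | add p q hp hq =>
      rw [map_add, Lmap_add, hp, hq, map_add]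
  | mul_X p i hp =>
      rw [map_mul, Lmap_mul, Polynomial.derivative_mul, hp, L_J_X]

lemma Jmap_coeff_zero (g : MvPolynomial (Fin n) k) :
    (Jmap k n m g).coeff 0 =
      MvPolynomial.rename (fun i : Fin n => (i, (0 : Fin (m + 1)))) g := by
  have h : ((Polynomial.aeval (0 : MvPolynomial (Fin n × Fin (m + 1)) k)).restrictScalars k).comp
        (Jmap k n m) =
      MvPolynomial.rename (fun i : Fin n => (i, (0 : Fin (m + 1)))) := by
    apply MvPolynomial.algHom_ext
    intro i
    simp only [AlgHom.coe_comp, AlgHom.coe_restrictScalars', Function.comp_apply, Jmap_X,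
      map_sum, map_mul, Polynomial.aeval_C, Polynomial.aeval_X_pow, MvPolynomial.rename_X]
    rw [Fin.sum_univ_succ]
    simp [zero_pow]
  have := congrArg (fun F => F g) h
  simp only [AlgHom.coe_comp, AlgHom.coe_restrictScalars', Function.comp_apply] at this
  rw [← this, Polynomial.coeff_zero_eq_eval_zero, ← Polynomial.coe_aeval_eq_eval]

lemma Jmap_coeff (g : MvPolynomial (Fin n) k) (j : ℕ) :
    (Jmap k n m g).coeff j =
      ((j.factorial : k)⁻¹) •
        (⇑(truncDeriv k n m))^[j]
          (MvPolynomial.rename (fun i : Fin n => (i, (0 : Fin (m + 1)))) g) := by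
  induction j with
  | zero => simp [Jmap_coeff_zero]
  | succ j ih =>
      have h1 : truncDeriv k n m ((Jmap k n m g).coeff j) =
          (Jmap k n m g).coeff (j + 1) * ((j : MvPolynomial (Fin n × Fin (m + 1)) k) + 1) := by
        rw [← Lmap_coeff, L_J, Polynomial.coeff_derivative]
      rw [ih, Derivation.map_smul, ← Function.iterate_succ_apply' (⇑(truncDeriv k n m))] at h1
      have hc : ((j : MvPolynomial (Fin n × Fin (m + 1)) k) + 1) = ((j + 1 : ℕ) : _) := by
        push_cast; ring
      rw [hc, mul_comm, ← nsmul_eq_mul, ← Nat.cast_smul_eq_nsmul k] at h1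
      have h2 := congrArg (fun x => (((j + 1 : ℕ) : k)⁻¹) • x) h1
      simp only [smul_smul] at h2
      rw [inv_mul_cancel₀ (show ((j + 1 : ℕ) : k) ≠ 0 by exact_mod_cast Nat.succ_ne_zero j),
        one_smul] at h2
      rw [← h2, Nat.factorial_succ, Nat.cast_mul, mul_inv]

lemma phi_coeff (g : MvPolynomial (Fin n) k) (j : ℕ) :
    phi k n m ((jetSubst k n m g).coeff j) =
      ((j.factorial : k)⁻¹) •
        (⇑(truncDeriv k n m))^[j]
          (MvPolynomial.rename (fun i : Fin n => (i, (0 : Fin (m + 1)))) g) := by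
  rw [phi_apply, ← Jmap_coeff_eq, Jmap_coeff]

end JetAux

lemma jet_map_eq (k : Type*) [Field k] [CharZero k] (n r m : ℕ)
    (f : Fin r → MvPolynomial (Fin n) k) :
    truncDiffIdeal k f m = (jetIdeal k f m).map (↑(phi k n m) :
      MvPolynomial (Fin n × Fin (m + 1)) k →+* MvPolynomial (Fin n × Fin (m + 1)) k) := by
  rw [jetIdeal, Ideal.map_span]
  apply le_antisymm
  · rw [truncDiffIdeal, Ideal.span_le]
    rintro x ⟨s, j, hj, rfl⟩
    have hmem : (↑(phi k n m) :
            MvPolynomial (Fin n × Fin (m + 1)) k →+* MvPolynomial (Fin n × Fin (m + 1)) k)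
          ((jetSubst k n m (f s)).coeff j) ∈
        Ideal.span ((↑(phi k n m) :
            MvPolynomial (Fin n × Fin (m + 1)) k →+* MvPolynomial (Fin n × Fin (m + 1)) k) ''
          {g | ∃ (s : Fin r) (j : ℕ), j ≤ m ∧ g = (jetSubst k n m (f s)).coeff j}) :=
      Ideal.subset_span ⟨_, ⟨s, j, hj, rfl⟩, rfl⟩
    have key : (⇑(truncDeriv k n m))^[j]
          (MvPolynomial.rename (fun i : Fin n => (i, (0 : Fin (m + 1)))) (f s)) =
        ((j.factorial : k)) • (phi k n m ((jetSubst k n m (f s)).coeff j)) := by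
      rw [phi_coeff, smul_smul,
        mul_inv_cancel₀ (show ((j.factorial : k)) ≠ 0 by exact_mod_cast Nat.factorial_ne_zero j),
        one_smul]
    rw [key, Algebra.smul_def]
    exact Ideal.mul_mem_left _ _ hmem
  · rw [Ideal.span_le]
    rintro x ⟨y, ⟨s, j, hj, rfl⟩, rfl⟩
    have : phi k n m ((jetSubst k n m (f s)).coeff j) =
        ((j.factorial : k)⁻¹) • (⇑(truncDeriv k n m))^[j]
          (MvPolynomial.rename (fun i : Fin n => (i, (0 : Fin (m + 1)))) (f s)) :=
      phi_coeff k n m (f s) j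
    show phi k n m ((jetSubst k n m (f s)).coeff j) ∈ truncDiffIdeal k f m
    rw [this, Algebra.smul_def]
    exact Ideal.mul_mem_left _ _ (Ideal.subset_span ⟨s, j, hj, rfl⟩)


/-- In characteristic `0`, the map `y_{i,ℓ} ↦ y_i⁽ˡ⁾/ℓ!` induces an isomorphism of
`k`-algebras between the jet ring `k[y_{i,ℓ}]/Ĩ_m` and the truncated differential
polynomial ring `k[y₁⁽≤ᵐ⁾, …, y_n⁽≤ᵐ⁾]/I⁽≤ᵐ⁾`. -/
theorem jet_trunc_diff_iso (k : Type*) [Field k] [CharZero k] (n r m : ℕ)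
    (f : Fin r → MvPolynomial (Fin n) k) :
    ∃ e : (MvPolynomial (Fin n × Fin (m + 1)) k ⧸ jetIdeal k f m) ≃ₐ[k]
          (MvPolynomial (Fin n × Fin (m + 1)) k ⧸ truncDiffIdeal k f m),
      ∀ (i : Fin n) (ℓ : Fin (m + 1)),
        e (Ideal.Quotient.mk (jetIdeal k f m) (MvPolynomial.X (i, ℓ))) =
          Ideal.Quotient.mk (truncDiffIdeal k f m)
            ((((ℓ : ℕ).factorial : k)⁻¹) • MvPolynomial.X (i, ℓ)) := by
  refine ⟨Ideal.quotientEquivAlg (jetIdeal k f m) (truncDiffIdeal k f m) (phi k n m)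
    (jet_map_eq k n r m f), fun i ℓ => ?_⟩
  have h1 : Ideal.quotientEquivAlg (jetIdeal k f m) (truncDiffIdeal k f m) (phi k n m)
        (jet_map_eq k n r m f)
        (Ideal.Quotient.mk (jetIdeal k f m) (MvPolynomial.X (i, ℓ))) =
      Ideal.Quotient.mk (truncDiffIdeal k f m) (phi k n m (MvPolynomial.X (i, ℓ))) := rfl
  rw [h1]
  congr 1
  rw [phi_apply, phiF, MvPolynomial.aeval_X]
end
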